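/- Let K be a field of characteristic 2, let n ≥ 1, and let y₁, …, yₙ ∈ K be pairwise distinct and all nonzero. Then (y₁ ⋯ yₙ)⁻¹ + ∑_{i=1}^{n} ( y_i · ∏_{j≠i} (y_i + y_j) )⁻¹ = 0. -/

import Mathlib

open scoped BigOperators

/-- Lemma 4.1(ii). Let `K` be a field of characteristic `2`, `n ≥ 1`,
and `y₁, …, yₙ ∈ K` pairwise distinct and all nonzero.  Then
`(y₁ ⋯ yₙ)⁻¹ + ∑_{i=1}^n (y_i · ∏_{j≠i} (y_i + y_j))⁻¹ = 0`. -/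
theorem inv_prod_add_sum_eq_zero (K : Type*) [Field K] [CharP K 2] (n : ℕ) (hn : 1 ≤ n)
    (y : Fin n → K) (hy : Function.Injective y) (hy0 : ∀ i, y i ≠ 0) :
    (∏ i : Fin n, y i)⁻¹ +
      ∑ i : Fin n, (y i * ∏ j ∈ Finset.univ.erase i, (y i + y j))⁻¹ = 0 := by
  have : NeZero n := ⟨Nat.one_le_iff_ne_zero.mp hn⟩
  have hne : (Finset.univ : Finset (Fin n)).Nonempty := Finset.univ_nonempty
  have hinj : Set.InjOn y (Finset.univ : Finset (Fin n)) := hy.injOn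
  have hsum := Lagrange.sum_basis hinj hne
  have hsum0 := congrArg (Polynomial.eval 0) hsum
  rw [Polynomial.eval_finset_sum, Polynomial.eval_one] at hsum0
  -- rewrite each evaluated basis polynomial
  have hkey : ∀ i : Fin n, Polynomial.eval 0 (Lagrange.basis Finset.univ y i)
      = (∏ j ∈ Finset.univ.erase i, y j) * (∏ j ∈ Finset.univ.erase i, (y i + y j))⁻¹ := by
    intro i
    have hneg : ∀ a : K, -a = a := fun a => CharTwo.neg_eq a
    have : ∀ j ∈ Finset.univ.erase i,
        Polynomial.eval 0 (Lagrange.basisDivisor (y i) (y j)) = y j * (y i + y j)⁻¹ := by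
      intro j hj
      rw [Lagrange.basisDivisor]
      simp [sub_eq_add_neg, hneg, mul_comm]
    rw [Lagrange.basis, Polynomial.eval_prod, Finset.prod_congr rfl this,
      Finset.prod_mul_distrib, ← Finset.prod_inv_distrib]
  simp only [hkey] at hsum0
  -- now 1 = ∑ i, (∏_{j≠i} y j) * (∏_{j≠i} (y i + y j))⁻¹
  have hprod : (∏ i : Fin n, y i) ≠ 0 := Finset.prod_ne_zero_iff.mpr fun i _ => hy0 i
  have h2 : (∏ i : Fin n, y i)⁻¹ = ∑ i : Fin n, (y i * ∏ j ∈ Finset.univ.erase i, (y i + y j))⁻¹ := by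
    calc (∏ i : Fin n, y i)⁻¹ = (∏ i : Fin n, y i)⁻¹ * 1 := (mul_one _).symm
    _ = (∏ i : Fin n, y i)⁻¹ *
        ∑ i : Fin n, (∏ j ∈ Finset.univ.erase i, y j) * (∏ j ∈ Finset.univ.erase i, (y i + y j))⁻¹ := by
        rw [← hsum0]
    _ = ∑ i : Fin n, (y i * ∏ j ∈ Finset.univ.erase i, (y i + y j))⁻¹ := by
        rw [Finset.mul_sum]
        refine Finset.sum_congr rfl fun i _ => ?_
        have h3 : (∏ x ∈ Finset.univ.erase i, y x) ≠ 0 :=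
          Finset.prod_ne_zero_iff.mpr fun j _ => hy0 j
        rw [mul_inv, ← Finset.prod_erase_mul _ _ (Finset.mem_univ i)]
        have h4 : (∏ j ∈ Finset.univ.erase i, (y i + y j)) ≠ 0 :=
          Finset.prod_ne_zero_iff.mpr fun j hj => by
            rw [← CharTwo.sub_eq_add]
            exact sub_ne_zero_of_ne (fun h => (Finset.mem_erase.mp hj).1 (hy h).symm)
        field_simp
  rw [h2, CharTwo.add_self_eq_zero]
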